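/- Let F : C[0,1] → ℝ be continuous linear and let F⁺, F⁻ be non-negative continuous linear functionals with F = F⁺ - F⁻. Then (F⁺, F⁻) is the minimal (Jordan) decomposition of F if and only if ‖F‖ = ‖F⁺‖ + ‖F⁻‖. -/

import Mathlib

/-- A continuous linear functional on C[0,1] is non-negative if it is
non-negative on non-negative functions. -/
def NonnegFunctional (F : C(Set.Icc (0:ℝ) 1, ℝ) →L[ℝ] ℝ) : Prop :=
  ∀ h : C(Set.Icc (0:ℝ) 1, ℝ), (∀ x, 0 ≤ h x) → 0 ≤ F h

namespace JDaux

abbrev X : Type := C(Set.Icc (0:ℝ) 1, ℝ)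

lemma X_le {g h : X} (H : ∀ x, g x ≤ h x) : g ≤ h :=
  ContinuousMap.le_def.mpr H

lemma le_app {g h : X} (H : g ≤ h) (x : Set.Icc (0:ℝ) 1) : g x ≤ h x :=
  ContinuousMap.le_def.mp H x

lemma nn_app {g : X} (hg : (0:X) ≤ g) (x : Set.Icc (0:ℝ) 1) : 0 ≤ g x := by
  simpa using le_app hg x

lemma nn_mono {G : X →L[ℝ] ℝ} (hG : NonnegFunctional G) {g h : X}
    (hle : ∀ x, g x ≤ h x) : G g ≤ G h := by
  have h1 : 0 ≤ G (h - g) := hG (h - g) (fun x => by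
    simp only [ContinuousMap.sub_apply]; linarith [hle x])
  have h2 : G (h - g) = G h - G g := map_sub G h g
  linarith

lemma nn_apply {G : X →L[ℝ] ℝ} (hG : NonnegFunctional G) {g : X}
    (hg : (0:X) ≤ g) : 0 ≤ G g := hG g (nn_app hg)

lemma norm_one_X : ‖(1:X)‖ = 1 := by
  refine le_antisymm ((ContinuousMap.norm_le _ zero_le_one).2 fun x => by simp) ?_
  have := ContinuousMap.norm_coe_le_norm (1:X) ⟨0, by norm_num⟩
  simpa using this

lemma norm_eq {G : X →L[ℝ] ℝ} (hG : NonnegFunctional G) : ‖G‖ = G 1 := by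
  refine le_antisymm ?_ ?_
  · refine ContinuousLinearMap.opNorm_le_bound G (hG 1 (fun x => by simp)) fun h => ?_
    rw [Real.norm_eq_abs, abs_le]
    have e1 : G (‖h‖ • (1:X)) = ‖h‖ * G 1 := by rw [map_smul]; simp
    have hub : ∀ x, |h x| ≤ ‖h‖ := fun x => h.norm_coe_le_norm x
    constructor
    · have := nn_mono hG (g := -(‖h‖ • (1:X))) (h := h) (fun x => by
        have := hub x
        simp only [ContinuousMap.neg_apply, ContinuousMap.smul_apply, ContinuousMap.one_apply,
          smul_eq_mul, mul_one]
        cases abs_le.mp this; linarith)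
      rw [map_neg, e1] at this
      linarith
    · have := nn_mono hG (g := h) (h := ‖h‖ • (1:X)) (fun x => by
        have := hub x
        simp only [ContinuousMap.smul_apply, ContinuousMap.one_apply, smul_eq_mul, mul_one]
        cases abs_le.mp this; linarith)
      rw [e1] at this
      linarith
  · have := G.le_opNorm 1
    rw [norm_one_X, mul_one, Real.norm_eq_abs] at this
    exact (le_abs_self _).trans this

lemma exists_u (F : X →L[ℝ] ℝ) {ε : ℝ} (hε : 0 < ε) :
    ∃ u : X, ‖u‖ ≤ 1 ∧ ‖F‖ - ε < F u := by
  obtain ⟨x, hx, hFx⟩ := F.exists_lt_apply_of_lt_opNorm (r := ‖F‖ - ε) (by linarith)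
  rw [Real.norm_eq_abs] at hFx
  rcases le_or_gt 0 (F x) with h | h
  · exact ⟨x, hx.le, by rwa [abs_of_nonneg h] at hFx⟩
  · refine ⟨-x, by simpa using hx.le, ?_⟩
    rw [map_neg]
    rwa [abs_of_neg h] at hFx

section lam

variable (Fp Fm : X →L[ℝ] ℝ)

def lamSet (h : X) : Set ℝ := (fun g => Fp (h - g) + Fm g) '' {g : X | 0 ≤ g ∧ g ≤ h}

noncomputable def lam (h : X) : ℝ := sInf (lamSet Fp Fm h)

variable {Fp Fm}
variable (hp : NonnegFunctional Fp) (hm : NonnegFunctional Fm)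

lemma lamSet_nonempty {h : X} (hh : (0:X) ≤ h) : (lamSet Fp Fm h).Nonempty :=
  ⟨Fp (h - 0) + Fm 0, ⟨0, ⟨le_refl 0, hh⟩, rfl⟩⟩

include hp hm in
lemma lamSet_bdd {h : X} : ∀ a ∈ lamSet Fp Fm h, 0 ≤ a := by
  rintro a ⟨g, ⟨hg0, hgh⟩, rfl⟩
  have h1 : 0 ≤ Fp (h - g) := hp _ (fun x => by
    simp only [ContinuousMap.sub_apply]; linarith [le_app hgh x])
  have h2 : 0 ≤ Fm g := nn_apply hm hg0
  exact add_nonneg h1 h2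

include hp hm in
lemma lam_nonneg {h : X} (hh : (0:X) ≤ h) : 0 ≤ lam Fp Fm h :=
  le_csInf (lamSet_nonempty hh) (lamSet_bdd hp hm)

include hp hm in
lemma lam_le {g h : X} (hg0 : (0:X) ≤ g) (hgh : g ≤ h) :
    lam Fp Fm h ≤ Fp (h - g) + Fm g :=
  csInf_le ⟨0, lamSet_bdd hp hm⟩ ⟨g, ⟨hg0, hgh⟩, rfl⟩

include hp hm in
lemma lam_le_Fp {h : X} (hh : (0:X) ≤ h) : lam Fp Fm h ≤ Fp h := by
  have := lam_le hp hm (le_refl (0:X)) hh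
  simpa using this

include hp hm in
lemma lam_le_Fm {h : X} (hh : (0:X) ≤ h) : lam Fp Fm h ≤ Fm h := by
  have := lam_le hp hm hh (le_refl h)
  simpa using this

lemma le_lam {h : X} (hh : (0:X) ≤ h) {c : ℝ}
    (H : ∀ g : X, (0:X) ≤ g → g ≤ h → c ≤ Fp (h - g) + Fm g) : c ≤ lam Fp Fm h := by
  refine le_csInf (lamSet_nonempty hh) ?_
  rintro a ⟨g, ⟨hg0, hgh⟩, rfl⟩
  exact H g hg0 hgh

include hp hm in
lemma lam_zero : lam Fp Fm 0 = 0 := by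
  have h1 := lam_le_Fp hp hm (le_refl (0:X))
  have h2 := lam_nonneg hp hm (le_refl (0:X))
  rw [map_zero] at h1
  linarith

include hp hm in
lemma lam_add {h₁ h₂ : X} (H1 : (0:X) ≤ h₁) (H2 : (0:X) ≤ h₂) :
    lam Fp Fm (h₁ + h₂) = lam Fp Fm h₁ + lam Fp Fm h₂ := by
  have H12 : (0:X) ≤ h₁ + h₂ := by
    refine X_le fun x => ?_
    have := nn_app H1 x; have := nn_app H2 x
    simp only [ContinuousMap.add_apply, ContinuousMap.zero_apply]; linarith
  have key : ∀ g₁ g₂ : X, (0:X) ≤ g₁ → g₁ ≤ h₁ → (0:X) ≤ g₂ → g₂ ≤ h₂ →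
      lam Fp Fm (h₁ + h₂) ≤ (Fp (h₁ - g₁) + Fm g₁) + (Fp (h₂ - g₂) + Fm g₂) := by
    intro g₁ g₂ hg10 hg1h hg20 hg2h
    have hg0 : (0:X) ≤ g₁ + g₂ := by
      refine X_le fun x => ?_
      have := nn_app hg10 x; have := nn_app hg20 x
      simp only [ContinuousMap.add_apply, ContinuousMap.zero_apply]; linarith
    have hgh : g₁ + g₂ ≤ h₁ + h₂ := by
      refine X_le fun x => ?_
      have := le_app hg1h x; have := le_app hg2h x
      simp only [ContinuousMap.add_apply]; linarith
    have := lam_le hp hm hg0 hgh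
    have e1 : h₁ + h₂ - (g₁ + g₂) = (h₁ - g₁) + (h₂ - g₂) := by abel
    rw [e1, map_add, map_add] at this
    linarith
  refine le_antisymm ?_ ?_
  · have step : lam Fp Fm (h₁ + h₂) - lam Fp Fm h₂ ≤ lam Fp Fm h₁ := by
      refine le_lam H1 fun g₁ hg10 hg1h => ?_
      rw [sub_le_iff_le_add, ← sub_le_iff_le_add']
      refine le_lam H2 fun g₂ hg20 hg2h => ?_
      have := key g₁ g₂ hg10 hg1h hg20 hg2h
      linarith
    linarith
  · refine le_lam H12 fun g hg0 hgh => ?_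
    set g₁ : X := g ⊓ h₁ with hg1def
    set g₂ : X := g - g₁ with hg2def
    have hg10 : (0:X) ≤ g₁ := le_inf hg0 H1
    have hg1h : g₁ ≤ h₁ := inf_le_right
    have hg20 : (0:X) ≤ g₂ := by
      refine X_le fun x => ?_
      simp only [hg2def, ContinuousMap.sub_apply, ContinuousMap.zero_apply, hg1def,
        ContinuousMap.inf_apply]
      exact sub_nonneg.2 inf_le_left
    have hg2h : g₂ ≤ h₂ := by
      refine X_le fun x => ?_
      have hx1 := le_app hgh x
      have hx2 := nn_app H2 x
      simp only [ContinuousMap.add_apply] at hx1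
      simp only [hg2def, ContinuousMap.sub_apply, hg1def, ContinuousMap.inf_apply]
      rcases le_total (g x) (h₁ x) with hc | hc
      · rw [inf_eq_left.2 hc]; linarith
      · rw [inf_eq_right.2 hc]; linarith
    have l1 := lam_le hp hm hg10 hg1h
    have l2 := lam_le hp hm hg20 hg2h
    have e1 : h₁ + h₂ - g = (h₁ - g₁) + (h₂ - g₂) := by rw [hg2def]; abel
    have e2 : g = g₁ + g₂ := by rw [hg2def]; abel
    calc lam Fp Fm h₁ + lam Fp Fm h₂
        ≤ (Fp (h₁ - g₁) + Fm g₁) + (Fp (h₂ - g₂) + Fm g₂) := by linarith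
      _ = Fp (h₁ + h₂ - g) + Fm g := by
          have e3 : Fm g = Fm g₁ + Fm g₂ := by rw [e2, map_add]
          rw [e1, map_add, e3]; ring

end lam

section D

variable {Fp Fm : X →L[ℝ] ℝ}
variable (hp : NonnegFunctional Fp) (hm : NonnegFunctional Fm)

variable (Fp Fm) in
noncomputable def Dfun (h : X) : ℝ := lam Fp Fm (h ⊔ 0) - lam Fp Fm ((-h) ⊔ 0)

include hp hm in
lemma Dfun_add (a b : X) : Dfun Fp Fm (a + b) = Dfun Fp Fm a + Dfun Fp Fm b := by
  have idA : ((a + b) ⊔ 0) + ((-a) ⊔ 0) + ((-b) ⊔ 0)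
      = ((-(a + b)) ⊔ 0) + (a ⊔ 0) + (b ⊔ 0) := by
    ext x
    simp only [ContinuousMap.add_apply, ContinuousMap.sup_apply, ContinuousMap.neg_apply,
      ContinuousMap.zero_apply, max_def]
    split_ifs <;> linarith
  have addlam : ∀ u v w : X, (0:X) ≤ u → (0:X) ≤ v → (0:X) ≤ w →
      lam Fp Fm (u + v + w) = lam Fp Fm u + lam Fp Fm v + lam Fp Fm w := by
    intro u v w hu hv hw
    have huv : (0:X) ≤ u + v := by
      refine X_le fun x => ?_
      have := nn_app hu x; have := nn_app hv x
      simp only [ContinuousMap.add_apply, ContinuousMap.zero_apply]; linarith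
    rw [lam_add hp hm huv hw, lam_add hp hm hu hv]
  have L := congrArg (lam Fp Fm) idA
  rw [addlam _ _ _ le_sup_right le_sup_right le_sup_right,
    addlam _ _ _ le_sup_right le_sup_right le_sup_right] at L
  simp only [Dfun]
  linarith

include hp hm in
lemma Dfun_of_nonneg {h : X} (hh : (0:X) ≤ h) : Dfun Fp Fm h = lam Fp Fm h := by
  rw [Dfun, sup_eq_left.2 hh, sup_eq_right.2 (neg_nonpos.2 hh), lam_zero hp hm, sub_zero]

lemma norm_sup_le (h : X) : ‖h ⊔ 0‖ ≤ ‖h‖ := by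
  refine (ContinuousMap.norm_le _ (norm_nonneg h)).2 fun x => ?_
  have := h.norm_coe_le_norm x
  simp only [ContinuousMap.sup_apply, ContinuousMap.zero_apply,
    Real.norm_eq_abs] at *
  rcases le_total (h x) 0 with hc | hc
  · rw [max_eq_right hc]; simpa using norm_nonneg h
  · rw [max_eq_left hc]; rwa [abs_of_nonneg hc] at this ⊢

include hp hm in
lemma Dfun_bound (h : X) : |Dfun Fp Fm h| ≤ ‖Fp‖ * ‖h‖ := by
  have b1 : lam Fp Fm (h ⊔ 0) ≤ ‖Fp‖ * ‖h‖ := by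
    refine (lam_le_Fp hp hm le_sup_right).trans ?_
    have := Fp.le_opNorm (h ⊔ 0)
    have h2 := norm_sup_le h
    have h3 : ‖Fp‖ * ‖h ⊔ 0‖ ≤ ‖Fp‖ * ‖h‖ := by
      exact mul_le_mul_of_nonneg_left h2 (norm_nonneg Fp)
    rw [Real.norm_eq_abs] at this
    calc Fp (h ⊔ 0) ≤ |Fp (h ⊔ 0)| := le_abs_self _
      _ ≤ ‖Fp‖ * ‖h ⊔ 0‖ := this
      _ ≤ ‖Fp‖ * ‖h‖ := h3
  have b2 : lam Fp Fm ((-h) ⊔ 0) ≤ ‖Fp‖ * ‖h‖ := by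
    refine (lam_le_Fp hp hm le_sup_right).trans ?_
    have := Fp.le_opNorm ((-h) ⊔ 0)
    have h2 := (norm_sup_le (-h)).trans_eq (norm_neg h)
    have h3 : ‖Fp‖ * ‖(-h) ⊔ 0‖ ≤ ‖Fp‖ * ‖h‖ :=
      mul_le_mul_of_nonneg_left h2 (norm_nonneg Fp)
    rw [Real.norm_eq_abs] at this
    calc Fp ((-h) ⊔ 0) ≤ |Fp ((-h) ⊔ 0)| := le_abs_self _
      _ ≤ ‖Fp‖ * ‖(-h) ⊔ 0‖ := this
      _ ≤ ‖Fp‖ * ‖h‖ := h3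
  have n1 : 0 ≤ lam Fp Fm (h ⊔ 0) := lam_nonneg hp hm le_sup_right
  have n2 : 0 ≤ lam Fp Fm ((-h) ⊔ 0) := lam_nonneg hp hm le_sup_right
  rw [Dfun, abs_le]
  constructor <;> linarith

variable (Fp Fm) in
noncomputable def Dhom : X →+ ℝ := AddMonoidHom.mk' (Dfun Fp Fm) (Dfun_add hp hm)

include hp hm in
lemma Dhom_cont : Continuous (Dhom Fp Fm hp hm) := by
  have : LipschitzWith ‖Fp‖₊ (Dhom Fp Fm hp hm) := by
    refine LipschitzWith.of_dist_le_mul fun a b => ?_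
    have e : (Dhom Fp Fm hp hm) a - (Dhom Fp Fm hp hm) b = Dfun Fp Fm (a - b) :=
      (map_sub (Dhom Fp Fm hp hm) a b).symm
    rw [Real.dist_eq, e, dist_eq_norm]
    simpa using Dfun_bound hp hm (a - b)
  exact this.continuous

variable (Fp Fm) in
noncomputable def D : X →L[ℝ] ℝ :=
  AddMonoidHom.toRealLinearMap (Dhom Fp Fm hp hm) (Dhom_cont hp hm)

lemma D_apply (h : X) : D Fp Fm hp hm h = Dfun Fp Fm h := rfl

end D

end JDaux

open JDaux in
set_option maxHeartbeats 2000000 in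
/-- A decomposition F = F⁺ - F⁻ into non-negative continuous linear
functionals is the minimal (Jordan) decomposition iff ‖F‖ = ‖F⁺‖ + ‖F⁻‖. -/
theorem jordan_decomposition_functional_iff_norm
    (F Fp Fm : C(Set.Icc (0:ℝ) 1, ℝ) →L[ℝ] ℝ)
    (hp : NonnegFunctional Fp) (hm : NonnegFunctional Fm)
    (hdec : F = Fp - Fm) :
    (∀ G₁ G₂ : C(Set.Icc (0:ℝ) 1, ℝ) →L[ℝ] ℝ,
        NonnegFunctional G₁ → NonnegFunctional G₂ → F = G₁ - G₂ →
        NonnegFunctional (G₁ - Fp) ∧ NonnegFunctional (G₂ - Fm)) ↔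
      ‖F‖ = ‖Fp‖ + ‖Fm‖ := by
  have h01 : (0:X) ≤ (1:X) := X_le fun x => by simp
  constructor
  · -- minimality → norm additivity
    intro hmin
    set G₁ : X →L[ℝ] ℝ := Fp - D Fp Fm hp hm with hG1
    set G₂ : X →L[ℝ] ℝ := Fm - D Fp Fm hp hm with hG2
    have hDlam : ∀ h : X, (0:X) ≤ h → D Fp Fm hp hm h = lam Fp Fm h := fun h hh => by
      rw [D_apply, Dfun_of_nonneg hp hm hh]
    have hg1 : NonnegFunctional G₁ := by
      intro h hh
      have hh' : (0:X) ≤ h := X_le fun x => by simpa using hh x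
      have e : G₁ h = Fp h - D Fp Fm hp hm h := ContinuousLinearMap.sub_apply _ _ _
      rw [e, hDlam h hh']
      linarith [lam_le_Fp hp hm hh']
    have hg2 : NonnegFunctional G₂ := by
      intro h hh
      have hh' : (0:X) ≤ h := X_le fun x => by simpa using hh x
      have e : G₂ h = Fm h - D Fp Fm hp hm h := ContinuousLinearMap.sub_apply _ _ _
      rw [e, hDlam h hh']
      linarith [lam_le_Fm hp hm hh']
    have hdec2 : F = G₁ - G₂ := by
      rw [hdec]
      ext g
      simp only [hG1, hG2, ContinuousLinearMap.sub_apply]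
      ring
    obtain ⟨H1, _⟩ := hmin G₁ G₂ hg1 hg2 hdec2
    have hD1 : 0 ≤ (G₁ - Fp) 1 := H1 1 (fun x => by simp)
    have e1 : (G₁ - Fp) 1 = -(lam Fp Fm 1) := by
      simp only [hG1, ContinuousLinearMap.sub_apply]
      rw [hDlam 1 h01]
      ring
    have hlam1 : lam Fp Fm 1 = 0 := by
      have := lam_nonneg hp hm h01
      rw [e1] at hD1
      linarith
    -- now derive the norm identity
    have hle : ‖F‖ ≤ ‖Fp‖ + ‖Fm‖ := by rw [hdec]; exact norm_sub_le Fp Fm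
    have hge : ∀ ε : ℝ, 0 < ε → ‖Fp‖ + ‖Fm‖ ≤ ‖F‖ + 2 * ε := by
      intro ε hε
      have hlt : sInf (lamSet Fp Fm 1) < ε := by
        have : lam Fp Fm 1 < ε := by rw [hlam1]; exact hε
        exact this
      obtain ⟨a, ha, haε⟩ := exists_lt_of_csInf_lt (lamSet_nonempty h01) hlt
      obtain ⟨g, ⟨hg0, hg1'⟩, rfl⟩ := ha
      simp only at haε
      set u : X := g + g - 1 with hu
      have hub : ∀ x, 0 ≤ g x ∧ g x ≤ 1 := fun x =>
        ⟨nn_app hg0 x, by simpa using le_app hg1' x⟩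
      have hunorm : ‖u‖ ≤ 1 := by
        refine (ContinuousMap.norm_le _ zero_le_one).2 fun x => ?_
        obtain ⟨hx1, hx2⟩ := hub x
        simp only [hu, ContinuousMap.sub_apply, ContinuousMap.add_apply,
          ContinuousMap.one_apply, Real.norm_eq_abs, abs_le]
        constructor <;> linarith
      have hFu : F u ≤ ‖F‖ := by
        have := F.le_opNorm u
        rw [Real.norm_eq_abs] at this
        have h2 : ‖F‖ * ‖u‖ ≤ ‖F‖ := mul_le_of_le_one_right (norm_nonneg F) hunorm
        linarith [le_abs_self (F u)]
      have eFu : F u = (Fp g + Fp g - Fp 1) - (Fm g + Fm g - Fm 1) := by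
        rw [hdec]
        simp only [ContinuousLinearMap.sub_apply, hu, map_sub, map_add]
        ring
      have ea : Fp (1 - g) + Fm g < ε := haε
      have ea2 : Fp (1 - g) = Fp 1 - Fp g := map_sub Fp 1 g
      have hFmg : 0 ≤ Fm g := nn_apply hm hg0
      have hFp1g : 0 ≤ Fp (1 - g) := hp _ (fun x => by
        obtain ⟨hx1, hx2⟩ := hub x
        simp only [ContinuousMap.sub_apply, ContinuousMap.one_apply]; linarith)
      rw [norm_eq hp, norm_eq hm]
      linarith
    have : ‖Fp‖ + ‖Fm‖ ≤ ‖F‖ := by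
      by_contra hcon
      push_neg at hcon
      have := hge ((‖Fp‖ + ‖Fm‖ - ‖F‖) / 4) (by linarith)
      linarith
    linarith
  · -- norm additivity → minimality
    intro hnorm G₁ G₂ hg1 hg2 hdecG
    have main : ∀ h : X, (∀ x, 0 ≤ h x) → Fp h ≤ G₁ h := by
      intro h hh
      have hc : (0:ℝ) < ‖h‖ + 1 := by positivity
      set c : ℝ := ‖h‖ + 1 with hcdef
      have key : ∀ ε : ℝ, 0 < ε → Fp h ≤ G₁ h + ε := by
        intro ε hε
        have hεc : 0 < ε / c := div_pos hε hc
        obtain ⟨u, hunorm, huF⟩ := exists_u F hεc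
        have hub : ∀ x, -1 ≤ u x ∧ u x ≤ 1 := fun x => by
          have := u.norm_coe_le_norm x
          rw [Real.norm_eq_abs] at this
          constructor <;> [linarith [abs_le.1 (this.trans hunorm)];
            linarith [abs_le.1 (this.trans hunorm)]]
        set g : X := h ⊓ (c • (u ⊔ 0)) with hgdef
        have happ : ∀ x, g x = min (h x) (c * max (u x) 0) := fun x => by
          simp only [hgdef, ContinuousMap.inf_apply, ContinuousMap.smul_apply,
            ContinuousMap.sup_apply, ContinuousMap.zero_apply, smul_eq_mul]
        have hg0 : (0:X) ≤ g := X_le fun x => by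
          rw [happ x]
          simp only [ContinuousMap.zero_apply]
          exact le_min (hh x) (mul_nonneg hc.le (le_max_right _ _))
        have hgh : ∀ x, g x ≤ h x := fun x => by rw [happ x]; exact min_le_left _ _
        have hhbd : ∀ x, h x ≤ c := fun x => by
          have := h.norm_coe_le_norm x
          rw [Real.norm_eq_abs] at this
          have := le_abs_self (h x)
          simp only [hcdef]; linarith
        have key1 : ∀ x, h x - g x ≤ c * (1 - u x) := fun x => by
          obtain ⟨hx1, hx2⟩ := hub x
          rw [happ x]
          have hcu : c * u x ≤ c * max (u x) 0 :=
            mul_le_mul_of_nonneg_left (le_max_left _ _) hc.le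
          rcases le_total (h x) (c * max (u x) 0) with hcase | hcase
          · rw [min_eq_left hcase]
            have : 0 ≤ c * (1 - u x) := mul_nonneg hc.le (by linarith)
            linarith
          · rw [min_eq_right hcase]
            have := hhbd x
            nlinarith
        have key2 : ∀ x, g x ≤ c * (1 + u x) := fun x => by
          obtain ⟨hx1, hx2⟩ := hub x
          rw [happ x]
          have : max (u x) 0 ≤ 1 + u x := max_le (by linarith) (by linarith)
          have := mul_le_mul_of_nonneg_left this hc.le
          have := min_le_right (h x) (c * max (u x) 0)
          linarith
        -- functional inequalities
        have A : Fp h - Fp g ≤ c * (Fp 1 - Fp u) := by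
          have := nn_mono hp (g := h - g) (h := c • ((1:X) - u)) (fun x => by
            simp only [ContinuousMap.sub_apply, ContinuousMap.smul_apply,
              ContinuousMap.one_apply, smul_eq_mul]
            exact key1 x)
          rw [map_sub, map_smul, map_sub] at this
          simpa using this
        have B : Fm g ≤ c * (Fm 1 + Fm u) := by
          have := nn_mono hm (g := g) (h := c • ((1:X) + u)) (fun x => by
            simp only [ContinuousMap.add_apply, ContinuousMap.smul_apply,
              ContinuousMap.one_apply, smul_eq_mul]
            exact key2 x)
          rw [map_smul, map_add] at this
          simpa using this
        have C : G₁ g ≤ G₁ h := nn_mono hg1 hgh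
        have Dq : 0 ≤ G₂ g := nn_apply hg2 hg0
        have E1 : F g = G₁ g - G₂ g := by
          rw [hdecG]; exact ContinuousLinearMap.sub_apply _ _ _
        have E2 : F g = Fp g - Fm g := by
          rw [hdec]; exact ContinuousLinearMap.sub_apply _ _ _
        have hcε : c * (ε / c) = ε := mul_div_cancel₀ ε hc.ne'
        have hnorm' : ‖F‖ = Fp 1 + Fm 1 := by
          rw [hnorm, norm_eq hp, norm_eq hm]
        rw [hnorm'] at huF
        have E3 : F u = Fp u - Fm u := by
          rw [hdec]; exact ContinuousLinearMap.sub_apply _ _ _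
        have P : c * (Fp 1 - Fp u) + c * (Fm 1 + Fm u) = c * (Fp 1 + Fm 1 - F u) := by
          rw [E3]; ring
        have Q : c * (Fp 1 + Fm 1 - F u) ≤ ε := by
          have h1 : Fp 1 + Fm 1 - F u ≤ ε / c := by linarith
          exact (le_div_iff₀' hc).mp h1
        linarith
      by_contra hcon
      push_neg at hcon
      have := key ((Fp h - G₁ h) / 2) (by linarith)
      linarith
    have eq12 : ∀ h : X, (∀ x, 0 ≤ h x) → (G₂ - Fm) h = (G₁ - Fp) h := by
      intro h hh
      have e1 : F h = Fp h - Fm h := by rw [hdec]; exact ContinuousLinearMap.sub_apply _ _ _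
      have e2 : F h = G₁ h - G₂ h := by rw [hdecG]; exact ContinuousLinearMap.sub_apply _ _ _
      simp only [ContinuousLinearMap.sub_apply]
      linarith
    constructor
    · intro h hh
      have := main h hh
      simp only [ContinuousLinearMap.sub_apply]
      linarith
    · intro h hh
      rw [eq12 h hh]
      have := main h hh
      simp only [ContinuousLinearMap.sub_apply]
      linarith
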